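/- Let C ∈ ℂ^{m×m} be diagonalizable as C = S Λ S^{-1} with S unitary, and let T = C + P for some P ∈ ℂ^{m×m}. Then every eigenvalue λ̃ of T satisfies |λ̃ − λ| ≤ ‖P‖₂ (spectral norm) for some eigenvalue λ of C. -/

import Mathlib

open Matrix Complex Finset

noncomputable def frobSq {m n : Type*} [Fintype m] [Fintype n] (A : Matrix m n ℂ) : ℝ :=
  ∑ i, ∑ j, ‖A i j‖ ^ 2

noncomputable def frob {m n : Type*} [Fintype m] [Fintype n] (A : Matrix m n ℂ) : ℝ :=
  Real.sqrt (frobSq A)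

noncomputable def l2sq {m : Type*} [Fintype m] (x : m → ℂ) : ℝ := ∑ i, ‖x i‖ ^ 2

noncomputable def l2 {m : Type*} [Fintype m] (x : m → ℂ) : ℝ := Real.sqrt (l2sq x)

/-- Spectral (l2 operator) norm of a square complex matrix. -/
noncomputable def specNorm {m : ℕ} (P : Matrix (Fin m) (Fin m) ℂ) : ℝ :=
  ‖Matrix.toEuclideanCLM (𝕜 := ℂ) P‖

/-- Unitary matrices preserve the Euclidean norm. -/
lemma unitary_mulVec_norm {m : ℕ} {S : Matrix (Fin m) (Fin m) ℂ}
    (hS : S ∈ Matrix.unitaryGroup (Fin m) ℂ) (w : Fin m → ℂ) :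
    ‖(WithLp.equiv 2 (Fin m → ℂ)).symm (S.mulVec w)‖ =
      ‖(WithLp.equiv 2 (Fin m → ℂ)).symm w‖ := by
  have hinner : ∀ a b : Fin m → ℂ,
      (inner ℂ ((WithLp.equiv 2 (Fin m → ℂ)).symm (S.mulVec a))
        ((WithLp.equiv 2 (Fin m → ℂ)).symm (S.mulVec b)) : ℂ) =
      inner ℂ ((WithLp.equiv 2 (Fin m → ℂ)).symm a) ((WithLp.equiv 2 (Fin m → ℂ)).symm b) := by
    intro a b
    rw [WithLp.equiv_symm_apply, EuclideanSpace.inner_toLp_toLp, EuclideanSpace.inner_toLp_toLp,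
      Matrix.star_mulVec, dotProduct_comm, ← Matrix.dotProduct_mulVec, Matrix.mulVec_mulVec]
    have : Sᴴ * S = 1 := hS.1
    rw [this, Matrix.one_mulVec, dotProduct_comm]
  have h1 := hinner w w
  have e1 : ‖(WithLp.equiv 2 (Fin m → ℂ)).symm (S.mulVec w)‖ ^ 2 =
      ‖(WithLp.equiv 2 (Fin m → ℂ)).symm w‖ ^ 2 := by
    rw [← @inner_self_eq_norm_sq ℂ, ← @inner_self_eq_norm_sq ℂ]
    exact_mod_cast congrArg Complex.re h1
  have := congrArg Real.sqrt e1
  rwa [Real.sqrt_sq (norm_nonneg _), Real.sqrt_sq (norm_nonneg _)] at this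

lemma mulVec_norm_le {m : ℕ} (P : Matrix (Fin m) (Fin m) ℂ) (x : Fin m → ℂ) :
    ‖(WithLp.equiv 2 (Fin m → ℂ)).symm (P.mulVec x)‖ ≤
      specNorm P * ‖(WithLp.equiv 2 (Fin m → ℂ)).symm x‖ := by
  have := (Matrix.toEuclideanCLM (𝕜 := ℂ) P).le_opNorm ((WithLp.equiv 2 (Fin m → ℂ)).symm x)
  rw [WithLp.equiv_symm_apply, Matrix.toEuclideanCLM_toLp] at this; exact this

/-- Bauer–Fike theorem for unitarily diagonalizable matrices. -/
theorem stmt9 {m : ℕ} (C S Λ P T : Matrix (Fin m) (Fin m) ℂ)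
    (hS : S ∈ Matrix.unitaryGroup (Fin m) ℂ) (hΛ : Λ.IsDiag)
    (hC : C = S * Λ * S⁻¹) (hT : T = C + P) :
    ∀ lam : ℂ, (∃ v, v ≠ 0 ∧ T.mulVec v = lam • v) →
      ∃ mu : ℂ, (∃ u, u ≠ 0 ∧ C.mulVec u = mu • u) ∧ ‖lam - mu‖ ≤ specNorm P := by
  rintro lam ⟨v, hv, hvv⟩
  have hm : 0 < m := by
    by_contra h
    push_neg at h
    interval_cases m
    exact hv (funext fun i => absurd i.2 (by omega))
  haveI : Nonempty (Fin m) := ⟨⟨0, hm⟩⟩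
  -- S⁻¹ = Sᴴ
  have hSinv : S⁻¹ = Sᴴ := Matrix.inv_eq_left_inv hS.1
  have hSS : S * Sᴴ = 1 := hS.2
  have hSHS : Sᴴ * S = 1 := hS.1
  -- choose the minimizing diagonal entry
  obtain ⟨i₀, -, hi₀⟩ := Finset.exists_min_image Finset.univ (fun i => ‖lam - Λ i i‖)
    ⟨Classical.arbitrary (Fin m), Finset.mem_univ _⟩
  refine ⟨Λ i₀ i₀, ⟨S.mulVec (Pi.single i₀ 1), ?_, ?_⟩, ?_⟩
  · -- eigenvector nonzero
    intro h
    have : Sᴴ.mulVec (S.mulVec (Pi.single i₀ 1)) = 0 := by rw [h, Matrix.mulVec_zero]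
    rw [Matrix.mulVec_mulVec, hSHS, Matrix.one_mulVec] at this
    have := congrFun this i₀
    simp at this
  · -- eigenvector equation
    have hΛs : Λ.mulVec (Pi.single i₀ (1:ℂ)) = Λ i₀ i₀ • (Pi.single i₀ 1 : Fin m → ℂ) := by
      ext j
      simp only [Matrix.mulVec_single, Pi.smul_apply, Pi.single_apply, smul_eq_mul, mul_one]
      by_cases hj : j = i₀
      · subst hj; simp
      · simp [hj, hΛ hj]
    have h1 : Sᴴ.mulVec (S.mulVec (Pi.single i₀ (1:ℂ))) = Pi.single i₀ (1:ℂ) := by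
      rw [Matrix.mulVec_mulVec, hSHS, Matrix.one_mulVec]
    rw [hC, hSinv, ← Matrix.mulVec_mulVec, h1, ← Matrix.mulVec_mulVec, hΛs, Matrix.mulVec_smul]
  · -- the norm bound
    set d : ℝ := ‖lam - Λ i₀ i₀‖ with hd
    have hd0 : 0 ≤ d := norm_nonneg _
    set w : Fin m → ℂ := Sᴴ.mulVec v with hw
    have hvw : S.mulVec w = v := by
      rw [hw, Matrix.mulVec_mulVec, hSS, Matrix.one_mulVec]
    have hw0 : w ≠ 0 := by
      intro h
      apply hv
      rw [← hvw, h, Matrix.mulVec_zero]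
    -- key identity: P v = S ((lam • w) - Λ w)
    have hkey : P.mulVec v = S.mulVec (lam • w - Λ.mulVec w) := by
      have hCv : C.mulVec v = S.mulVec (Λ.mulVec w) := by
        rw [hC, hSinv, ← Matrix.mulVec_mulVec, ← Matrix.mulVec_mulVec, ← hw]
      have hTv : C.mulVec v + P.mulVec v = lam • v := by
        rw [← Matrix.add_mulVec, ← hT, hvv]
      have hPv : P.mulVec v = lam • v - C.mulVec v := by
        rw [← hTv]; abel
      rw [hPv, hCv, ← hvw, Matrix.mulVec_sub, Matrix.mulVec_smul]
    -- norms
    set z : Fin m → ℂ := lam • w - Λ.mulVec w with hz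
    have hnormw : ‖(WithLp.equiv 2 (Fin m → ℂ)).symm v‖ =
        ‖(WithLp.equiv 2 (Fin m → ℂ)).symm w‖ := by
      rw [← hvw]; exact unitary_mulVec_norm hS w
    have hub : ‖(WithLp.equiv 2 (Fin m → ℂ)).symm z‖ ≤
        specNorm P * ‖(WithLp.equiv 2 (Fin m → ℂ)).symm w‖ := by
      have h1 : ‖(WithLp.equiv 2 (Fin m → ℂ)).symm (S.mulVec z)‖ =
          ‖(WithLp.equiv 2 (Fin m → ℂ)).symm z‖ := unitary_mulVec_norm hS z
      have h2 := mulVec_norm_le P v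
      rw [hkey, h1, hnormw] at h2
      exact h2
    -- lower bound : d * ‖w‖ ≤ ‖z‖
    have hzi : ∀ i, z i = (lam - Λ i i) * w i := by
      intro i
      have hΛw : Λ.mulVec w i = Λ i i * w i := by
        rw [Matrix.mulVec, dotProduct]
        rw [Finset.sum_eq_single i (fun j _ hj => by rw [hΛ (Ne.symm hj), zero_mul])
          (fun h => absurd (Finset.mem_univ i) h)]
      simp [hz, hΛw]
      ring
    have hlb : d * ‖(WithLp.equiv 2 (Fin m → ℂ)).symm w‖ ≤
        ‖(WithLp.equiv 2 (Fin m → ℂ)).symm z‖ := by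
      rw [EuclideanSpace.norm_eq, EuclideanSpace.norm_eq]
      rw [← Real.sqrt_sq hd0, ← Real.sqrt_mul (by positivity)]
      apply Real.sqrt_le_sqrt
      rw [Finset.mul_sum]
      apply Finset.sum_le_sum
      intro i _
      simp only [WithLp.equiv_symm_apply, WithLp.ofLp_toLp]
      have : ‖z i‖ ^ 2 = ‖lam - Λ i i‖ ^ 2 * ‖w i‖ ^ 2 := by
        rw [hzi i, norm_mul, mul_pow]
      rw [this]
      have := hi₀ i (Finset.mem_univ i)
      have h2 : d ^ 2 ≤ ‖lam - Λ i i‖ ^ 2 := by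
        apply sq_le_sq' <;> nlinarith [norm_nonneg (lam - Λ i i)]
      nlinarith [sq_nonneg ‖w i‖]
    have hwpos : 0 < ‖(WithLp.equiv 2 (Fin m → ℂ)).symm w‖ := by
      rw [norm_pos_iff]
      intro h
      apply hw0
      have := congrArg (WithLp.equiv 2 (Fin m → ℂ)) h
      simpa using this
    exact le_of_mul_le_mul_right (le_trans hlb hub) hwpos
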